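/- arXiv:2406.01816 — 9 statements merged into one kernel-verified Lean document; each statement's English description precedes it below -/
import Mathlib

section
/- Let H be a complex Hilbert space. Every nonempty collection 𝒫 of partitions of H has a least upper bound in the refinement order on partitions of H. -/
variable {H : Type*} [NormedAddCommGroup H] [InnerProductSpace ℂ H]

/-- Two subspaces of a complex inner product space are orthogonal when every vector of
one is orthogonal to every vector of the other. -/
def Orth (p q : Submodule ℂ H) : Prop :=
  ∀ x ∈ p, ∀ y ∈ q, @inner ℂ H _ x y = 0

/-- A partition of `H` is a set of nonzero closed subspaces of `H` that are pairwise
orthogonal and whose supremum in the complete lattice of closed subspaces of `H`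
(i.e. the topological closure of the submodule supremum) is all of `H`. -/
def IsPartition (P : Set (Submodule ℂ H)) : Prop :=
  (∀ p ∈ P, p ≠ ⊥) ∧
  (∀ p ∈ P, IsClosed (p : Set H)) ∧
  (∀ p ∈ P, ∀ q ∈ P, p ≠ q → Orth p q) ∧
  (sSup P).topologicalClosure = ⊤

/-- `P₁` refines `P₂` when every cell of `P₁` is contained in some cell of `P₂`. -/
def Refines (P₁ P₂ : Set (Submodule ℂ H)) : Prop :=
  ∀ p ∈ P₁, ∃ q ∈ P₂, p ≤ q

/-- A multicell of a partition `P` is the supremum (in the lattice of closed subspaces)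
of a possibly empty subset of `P`. -/
def IsMulticell (P : Set (Submodule ℂ H)) (m : Submodule ℂ H) : Prop :=
  ∃ C ⊆ P, m = (sSup C).topologicalClosure

lemma orth_symm {p q : Submodule ℂ H} (h : Orth p q) : Orth q p :=
  fun y hy x hx => inner_eq_zero_symm.mpr (h x hx y hy)

lemma orth_iff_le_orthogonal {p q : Submodule ℂ H} : Orth p q ↔ q ≤ pᗮ := by
  constructor
  · intro h y hy
    exact (Submodule.mem_orthogonal p y).mpr (fun x hx => h x hx y hy)
  · intro h x hx y hy
    exact (Submodule.mem_orthogonal p y).mp (h hy) x hx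

lemma orth_closure {C D : Set (Submodule ℂ H)}
    (h : ∀ r ∈ C, ∀ s ∈ D, Orth r s) :
    Orth (sSup C).topologicalClosure (sSup D).topologicalClosure := by
  have step1 : ∀ r ∈ C, Orth r (sSup D).topologicalClosure := by
    intro r hr
    rw [orth_iff_le_orthogonal]
    exact Submodule.topologicalClosure_minimal _
      (sSup_le fun s hs => orth_iff_le_orthogonal.mp (h r hr s hs))
      (Submodule.isClosed_orthogonal r)
  have step2 : Orth (sSup D).topologicalClosure (sSup C).topologicalClosure := by
    rw [orth_iff_le_orthogonal]
    exact Submodule.topologicalClosure_minimal _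
      (sSup_le fun r hr => orth_iff_le_orthogonal.mp (orth_symm (step1 r hr)))
      (Submodule.isClosed_orthogonal _)
  exact orth_symm step2

/-- Let `H` be a complex Hilbert space. Every nonempty collection `Ps` of
partitions of `H` has a least upper bound in the refinement order on partitions of `H`. -/
theorem exists_lub_of_partitions [CompleteSpace H]
    (Ps : Set (Set (Submodule ℂ H))) (hne : Ps.Nonempty) (h : ∀ P ∈ Ps, IsPartition P) :
    ∃ Q : Set (Submodule ℂ H), IsPartition Q ∧ (∀ P ∈ Ps, Refines P Q) ∧
      ∀ Q' : Set (Submodule ℂ H), IsPartition Q' → (∀ P ∈ Ps, Refines P Q') → Refines Q Q' := by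
  classical
  set S : Set (Submodule ℂ H) := ⋃₀ Ps with hS
  set R : Submodule ℂ H → Submodule ℂ H → Prop :=
    fun a b => a ∈ S ∧ b ∈ S ∧ ¬ Orth a b with hR
  have hRsymm : Symmetric R := fun a b hab =>
    ⟨hab.2.1, hab.1, fun hor => hab.2.2 (orth_symm hor)⟩
  have hreachsymm : Symmetric (Relation.ReflTransGen R) :=
    (@Relation.ReflTransGen.stdSymm _ R ⟨hRsymm⟩).symm
  set comp : Submodule ℂ H → Set (Submodule ℂ H) :=
    fun p => {r | r ∈ S ∧ Relation.ReflTransGen R p r} with hcomp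
  set Q : Set (Submodule ℂ H) :=
    {q | ∃ p ∈ S, q = (sSup (comp p)).topologicalClosure} with hQ
  -- basic facts
  have hcell_ne : ∀ p ∈ S, p ≠ ⊥ := by
    rintro p ⟨P, hP, hpP⟩
    exact (h P hP).1 p hpP
  have hself : ∀ p ∈ S, p ∈ comp p := fun p hp => ⟨hp, Relation.ReflTransGen.refl⟩
  have hle_cl : ∀ p ∈ S, p ≤ (sSup (comp p)).topologicalClosure := fun p hp =>
    le_trans (le_sSup (hself p hp)) (Submodule.le_topologicalClosure _)
  have comp_eq : ∀ p p', Relation.ReflTransGen R p p' → comp p = comp p' := by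
    intro p p' hpp'
    ext r
    exact ⟨fun hr => ⟨hr.1, Relation.ReflTransGen.trans (hreachsymm hpp') hr.2⟩,
      fun hr => ⟨hr.1, Relation.ReflTransGen.trans hpp' hr.2⟩⟩
  have comp_orth : ∀ p p', ¬ Relation.ReflTransGen R p p' →
      ∀ r ∈ comp p, ∀ s ∈ comp p', Orth r s := by
    intro p p' hnp r hr s hs
    by_contra hor
    exact hnp (Relation.ReflTransGen.trans (hr.2.tail ⟨hr.1, hs.1, hor⟩) (hreachsymm hs.2))
  refine ⟨Q, ⟨?_, ?_, ?_, ?_⟩, ?_, ?_⟩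
  · -- nonzero cells
    rintro q ⟨p, hpS, rfl⟩
    intro hbot
    exact hcell_ne p hpS (le_bot_iff.mp (hbot ▸ hle_cl p hpS))
  · -- closed cells
    rintro q ⟨p, hpS, rfl⟩
    exact Submodule.isClosed_topologicalClosure _
  · -- pairwise orthogonal
    rintro q ⟨p, hpS, rfl⟩ q' ⟨p', hp'S, rfl⟩ hne'
    by_cases hreach : Relation.ReflTransGen R p p'
    · exact absurd (congrArg (fun C => (sSup C).topologicalClosure) (comp_eq p p' hreach)) hne'
    · exact orth_closure (comp_orth p p' hreach)
  · -- dense supremum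
    obtain ⟨P₀, hP₀⟩ := hne
    have hsle : sSup P₀ ≤ sSup Q := by
      apply sSup_le
      intro p hp
      have hpS : p ∈ S := ⟨P₀, hP₀, hp⟩
      exact le_trans (le_sSup (hself p hpS))
        (le_trans (Submodule.le_topologicalClosure _)
          (le_sSup ⟨p, hpS, rfl⟩))
    have := Submodule.topologicalClosure_mono (M := H) hsle
    rw [(h P₀ hP₀).2.2.2] at this
    exact top_unique this
  · -- every P refines Q
    intro P hP p hp
    have hpS : p ∈ S := ⟨P, hP, hp⟩
    exact ⟨(sSup (comp p)).topologicalClosure, ⟨p, hpS, rfl⟩, hle_cl p hpS⟩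
  · -- leastness
    intro Q' hQ' hRef q hqQ
    obtain ⟨p, hpS, rfl⟩ := hqQ
    obtain ⟨P, hP, hpP⟩ := hpS
    obtain ⟨c, hcQ', hpc⟩ := hRef P hP p hpP
    -- every cell reachable from p lies in c
    have key : ∀ r, Relation.ReflTransGen R p r → r ≤ c := by
      intro r hr
      induction hr with
      | refl => exact hpc
      | @tail b r' hstep step ih =>
        obtain ⟨P', hP', hrP'⟩ := step.2.1
        obtain ⟨c', hc'Q', hrc'⟩ := hRef P' hP' r' hrP'
        by_cases hcc : c = c'
        · exact hcc ▸ hrc'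
        · exfalso
          apply step.2.2
          intro x hx y hy
          exact hQ'.2.2.1 c hcQ' c' hc'Q' hcc x (ih hx) y (hrc' hy)
    refine ⟨c, hcQ', ?_⟩
    exact Submodule.topologicalClosure_minimal _
      (sSup_le fun r hr => key r hr.2) (hQ'.2.1 c hcQ')
end

section
/- Let H be a complex Hilbert space, let P be a partition of H, and let r be a closed subspace of H. Then the subspace m = ⨆{ p ∈ P : p is not orthogonal to r } is the least multicell of P containing r: r ≤ m, and for every subset C ⊆ P with r ≤ ⨆C one has m ≤ ⨆C. -/
variable {H : Type*} [NormedAddCommGroup H] [InnerProductSpace ℂ H]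

/-- Let `H` be a complex Hilbert space, `P` a partition of `H`, and `r` a
closed subspace of `H`.  Then `m = ⨆ {p ∈ P | p is not orthogonal to r}` (taken in the lattice
of closed subspaces) is the least multicell of `P` containing `r`: one has `r ≤ m`, and for
every subset `C ⊆ P` with `r ≤ ⨆ C` one has `m ≤ ⨆ C`. -/
theorem least_multicell_containing [CompleteSpace H]
    (P : Set (Submodule ℂ H)) (hP : IsPartition P)
    (r : Submodule ℂ H) (hr : IsClosed (r : Set H)) :
    r ≤ (sSup {p ∈ P | ¬ Orth p r}).topologicalClosure ∧
      ∀ C ⊆ P, r ≤ (sSup C).topologicalClosure →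
        (sSup {p ∈ P | ¬ Orth p r}).topologicalClosure ≤ (sSup C).topologicalClosure := by
  obtain ⟨-, -, hortho, htop⟩ := hP
  set M : Set (Submodule ℂ H) := {p ∈ P | ¬ Orth p r} with hM
  set A : Submodule ℂ H := (sSup M).topologicalClosure with hA
  constructor
  · -- r ≤ A
    intro x hx
    haveI : CompleteSpace A := (sSup M).isClosed_topologicalClosure.completeSpace_coe
    obtain ⟨a, ha, b, hb, hab⟩ := A.exists_add_mem_mem_orthogonal x
    -- show b = 0
    have hbP : b ∈ (sSup P)ᗮ := by
      rw [← Submodule.sInf_orthogonal]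
      simp only [Submodule.mem_iInf]
      intro q hq
      by_cases hqM : Orth q r
      · -- q ⊥ r and q ⊥ A, so q ⊥ b = x - a
        have hqr : ∀ u ∈ q, @inner ℂ H _ u x = 0 := fun u hu => hqM u hu x hx
        have hqA : q ≤ Aᗮ := by
          rw [hA, ← Submodule.orthogonal_orthogonal_eq_closure,
            Submodule.triorthogonal_eq_orthogonal]
          rw [← Submodule.sInf_orthogonal]
          intro u hu
          simp only [Submodule.mem_iInf]
          intro p hp
          rw [Submodule.mem_orthogonal]
          intro v hv
          have hne : p ≠ q := fun h => (hp.2 (h ▸ hqM))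
          exact hortho p hp.1 q hq hne v hv u hu
        have hqa : ∀ u ∈ q, @inner ℂ H _ u a = 0 := by
          intro u hu
          have := hqA hu
          rw [Submodule.mem_orthogonal] at this
          have := this a ha
          rwa [inner_eq_zero_symm]
        intro u hu
        have : b = x - a := by rw [hab]; abel
        rw [this, inner_sub_right, hqr u hu, hqa u hu, sub_zero]
      · -- q ∈ M so q ≤ sSup M ≤ A, and b ∈ Aᗮ
        intro u hu
        have hqA : q ≤ A := (le_sSup (show q ∈ M from ⟨hq, hqM⟩)).trans
          (sSup M).le_topologicalClosure
        rw [Submodule.mem_orthogonal] at hb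
        exact hb u (hqA hu)
    have hb0 : b = 0 := by
      have : (sSup P)ᗮ = ⊥ := Submodule.topologicalClosure_eq_top_iff.mp htop
      simpa [this] using hbP
    rw [hab, hb0, add_zero]
    exact ha
  · -- minimality
    intro C hC hrC
    apply Submodule.topologicalClosure_mono
    apply sSup_le
    intro p hp
    have hpC : p ∈ C := by
      by_contra hpc
      apply hp.2
      intro x hxp y hyr
      have hy : y ∈ (sSup C).topologicalClosure := hrC hyr
      -- p is orthogonal to every cell of C, hence to the closure of sSup C
      have hpOrth : (sSup C).topologicalClosure ≤ (Submodule.span ℂ {x})ᗮ := by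
        apply Submodule.topologicalClosure_minimal
        · apply sSup_le
          intro q hq u hu
          rw [Submodule.mem_orthogonal]
          intro v hv
          obtain ⟨c, hc⟩ := Submodule.mem_span_singleton.mp hv
          have hne : p ≠ q := fun h => hpc (h ▸ hq)
          have h0 : @inner ℂ H _ x u = 0 :=
            hortho p hp.1 q (hC hq) hne x hxp u hu
          rw [← hc, inner_smul_left, h0, mul_zero]
        · exact Submodule.isClosed_orthogonal _
      have := hpOrth hy
      rw [Submodule.mem_orthogonal] at this
      exact this x (Submodule.mem_span_singleton_self x)
    exact le_sSup hpC
end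

section
/- Let H be a complex Hilbert space, let P be a partition of H, and let p and q be closed subspaces of H that are not orthogonal to each other. Then there exists a cell r ∈ P such that r is not orthogonal to p and r is not orthogonal to q. -/
variable {H : Type*} [NormedAddCommGroup H] [InnerProductSpace ℂ H]

lemma mem_sSup_orthogonal {A : Set (Submodule ℂ H)} {x : H}
    (h : ∀ r ∈ A, ∀ v ∈ r, @inner ℂ H _ v x = 0) : x ∈ (sSup A)ᗮ := by
  rcases A.eq_empty_or_nonempty with rfl | hA
  · simp
  · have : Nonempty A := hA.to_subtype
    rw [sSup_eq_iSup', ← Submodule.iInf_orthogonal]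
    simp only [Submodule.mem_iInf]
    rintro ⟨r, hr⟩
    exact Submodule.mem_orthogonal r x |>.mpr (h r hr)

/-- Let `H` be a complex Hilbert space, `P` a partition of `H`, and `p`, `q`
closed subspaces of `H` that are not orthogonal to each other.  Then some cell `r ∈ P` is
not orthogonal to `p` and not orthogonal to `q`. -/
theorem exists_cell_not_orth_of_not_orth [CompleteSpace H]
    (P : Set (Submodule ℂ H)) (hP : IsPartition P)
    (p q : Submodule ℂ H) (hp : IsClosed (p : Set H)) (hq : IsClosed (q : Set H))
    (hpq : ¬ Orth p q) :
    ∃ r ∈ P, ¬ Orth r p ∧ ¬ Orth r q := by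
  by_contra hcon
  push_neg at hcon
  obtain ⟨hPne, hPcl, hPorth, hPtop⟩ := hP
  -- split P into cells orthogonal to p and the rest (orthogonal to q)
  set A : Set (Submodule ℂ H) := {r ∈ P | Orth r p} with hA
  set B : Set (Submodule ℂ H) := P \ A with hB
  have hBq : ∀ r ∈ B, Orth r q := by
    rintro r ⟨hrP, hrA⟩
    exact hcon r hrP (fun h => hrA ⟨hrP, h⟩)
  -- key orthogonality facts
  have hABorth : sSup B ≤ (sSup A)ᗮ := by
    apply sSup_le
    intro s hs x hx
    apply mem_sSup_orthogonal
    intro r hr v hv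
    exact hPorth r hr.1 s hs.1 (fun h => hs.2 (h ▸ hr)) v hv x hx
  -- dense union
  have hsup : sSup A ⊔ sSup B = sSup P := by
    rw [← sSup_union, Set.union_diff_cancel]
    intro r hr; exact hr.1
  have hbot : (sSup A)ᗮ ⊓ (sSup B)ᗮ = ⊥ := by
    rw [Submodule.inf_orthogonal, hsup, ← Submodule.orthogonal_orthogonal_eq_closure] at *
    rw [← Submodule.triorthogonal_eq_orthogonal (K := sSup P)]
    rw [hPtop]
    simp
  -- get witnesses
  rw [Orth] at hpq
  push_neg at hpq
  obtain ⟨x, hx, y, hy, hxy⟩ := hpq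
  have hxA : x ∈ (sSup A)ᗮ := by
    apply mem_sSup_orthogonal
    intro r hr v hv
    exact hr.2 v hv x hx
  have hyB : y ∈ (sSup B)ᗮ := by
    apply mem_sSup_orthogonal
    intro r hr v hv
    exact hBq r hr v hv y hy
  -- show x ∈ closure (sSup B)
  set N : Submodule ℂ H := (sSup B).topologicalClosure with hN
  have hNle : N ≤ (sSup A)ᗮ :=
    (sSup B).topologicalClosure_minimal hABorth (sSup A).isClosed_orthogonal
  have hNclosed : IsClosed (N : Set H) := Submodule.isClosed_topologicalClosure _
  haveI : CompleteSpace N := hNclosed.completeSpace_coe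
  obtain ⟨n, hn, n', hn', hxeq⟩ := N.exists_add_mem_mem_orthogonal x
  have hn'A : n' ∈ (sSup A)ᗮ := by
    have : n' = x - n := by rw [hxeq]; abel
    rw [this]
    exact Submodule.sub_mem _ hxA (hNle hn)
  have hn'B : n' ∈ (sSup B)ᗮ := by
    have hle : (sSup B)ᗮ = Nᗮ := by
      rw [hN, ← Submodule.orthogonal_orthogonal_eq_closure,
        Submodule.triorthogonal_eq_orthogonal]
    rw [hle]; exact hn'
  have hn'0 : n' = 0 := by
    have := Submodule.mem_inf.mpr ⟨hn'A, hn'B⟩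
    rw [hbot] at this
    simpa using this
  have hxN : x ∈ N := by rw [hxeq, hn'0, add_zero]; exact hn
  have hyN : y ∈ Nᗮ := by
    have : Nᗮ = (sSup B)ᗮ := by
      rw [hN, ← Submodule.orthogonal_orthogonal_eq_closure,
        Submodule.triorthogonal_eq_orthogonal]
    rw [this]; exact hyB
  exact hxy (Submodule.inner_right_of_mem_orthogonal hxN hyN)
end

section
/- Let H be a nonzero finite-dimensional complex Hilbert space, let q be a nonzero closed subspace of H, and let P₁, P₂, … be a sequence of partitions of H. Then there exists a sequence of cells p₁, p₂, … with pᵢ ∈ Pᵢ for all i, such that pᵢ is not orthogonal to p_{i+1} for all i, and pᵢ is not orthogonal to q for all i. Moreover, for any positive integer n and any prescribed cell p ∈ Pₙ that is not orthogonal to q, such a sequence exists with pₙ = p. -/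
variable {H : Type*} [NormedAddCommGroup H] [InnerProductSpace ℂ H]

lemma orth_iff_isOrtho (p q : Submodule ℂ H) : Orth p q ↔ p ⟂ q := by
  constructor
  · intro h x hx
    rw [Submodule.mem_orthogonal']
    exact h x hx
  · intro h x hx y hy
    exact h.inner_eq hx hy

lemma key [FiniteDimensional ℂ H] {P : Set (Submodule ℂ H)} (hPart : IsPartition P)
    {c q : Submodule ℂ H} (h : ¬ Orth c q) :
    ∃ p ∈ P, ¬ Orth p c ∧ ¬ Orth p q := by
  simp only [Orth, not_forall] at h
  obtain ⟨x, hx, y, hy, hxy⟩ := h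
  by_contra hcon
  push_neg at hcon
  have hsup : sSup P = ⊤ := by
    have := hPart.2.2.2
    rwa [IsClosed.submodule_topologicalClosure_eq (Submodule.closed_of_finiteDimensional _)] at this
  set A : Set (Submodule ℂ H) := {p ∈ P | ¬ Orth p c} with hA
  set B : Set (Submodule ℂ H) := {p ∈ P | Orth p c} with hB
  set U := sSup A
  set V := sSup B
  have hUV : U ⊔ V = ⊤ := by
    rw [← hsup, ← sSup_union]
    congr 1
    ext p
    by_cases hp : Orth p c <;> simp [hA, hB, hp]
  have hUVorth : U ⟂ V := by
    rw [Submodule.isOrtho_sSup_left]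
    intro u hu
    rw [Submodule.isOrtho_sSup_right]
    intro v hv
    rw [← orth_iff_isOrtho]
    have hne : u ≠ v := by
      rintro rfl
      exact hu.2 hv.2
    exact hPart.2.2.1 u hu.1 v hv.1 hne
  have hxV : x ∈ Vᗮ := by
    rw [Submodule.mem_orthogonal]
    intro v hv
    have : V ≤ (ℂ ∙ x)ᗮ := by
      apply sSup_le
      intro p hp
      intro z hz
      rw [Submodule.mem_orthogonal_singleton_iff_inner_right]
      rw [inner_eq_zero_symm]
      exact hp.2 z hz x hx
    have := this hv
    rw [Submodule.mem_orthogonal_singleton_iff_inner_right] at this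
    exact inner_eq_zero_symm.mp this
  have hle : U ≤ Vᗮ := hUVorth.le
  have hdim : Vᗮ = U := by
    refine (Submodule.eq_of_le_of_finrank_le hle ?_).symm
    have h1 := Submodule.finrank_sup_add_finrank_inf_eq U V
    have h2 : U ⊓ V = ⊥ := hUVorth.disjoint.eq_bot
    have h3 := Submodule.finrank_add_finrank_orthogonal (K := V)
    rw [hUV, h2, finrank_bot, add_zero, finrank_top] at h1
    omega
  rw [hdim] at hxV
  have hUy : U ≤ (ℂ ∙ y)ᗮ := by
    apply sSup_le
    intro p hp z hz
    rw [Submodule.mem_orthogonal_singleton_iff_inner_right, inner_eq_zero_symm]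
    exact hcon p hp.1 hp.2 z hz y hy
  have := hUy hxV
  rw [Submodule.mem_orthogonal_singleton_iff_inner_right, inner_eq_zero_symm] at this
  exact hxy this

lemma seq_exists [FiniteDimensional ℂ H] (P : ℕ → Set (Submodule ℂ H))
    (hP : ∀ i, IsPartition (P i)) (q : Submodule ℂ H) (g : ℕ → ℕ)
    (c : Submodule ℂ H) (hc : c ∈ P (g 0)) (hcq : ¬ Orth c q) :
    ∃ F : ℕ → Submodule ℂ H, F 0 = c ∧ (∀ k, F k ∈ P (g k)) ∧
      (∀ k, ¬ Orth (F k) q) ∧ ∀ k, ¬ Orth (F (k + 1)) (F k) := by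
  classical
  let next : (i : ℕ) → (c' : {p : Submodule ℂ H // ¬ Orth p q}) →
      {p : Submodule ℂ H // p ∈ P i ∧ ¬ Orth p q ∧ ¬ Orth p c'.1} := fun i c' =>
    ⟨(key (hP i) c'.2).choose,
      (key (hP i) c'.2).choose_spec.1,
      (key (hP i) c'.2).choose_spec.2.2,
      (key (hP i) c'.2).choose_spec.2.1⟩
  let G : (k : ℕ) → {p : Submodule ℂ H // p ∈ P (g k) ∧ ¬ Orth p q} := fun k =>
    Nat.rec ⟨c, hc, hcq⟩
      (fun k pk => ⟨(next (g (k + 1)) ⟨pk.1, pk.2.2⟩).1,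
        (next (g (k + 1)) ⟨pk.1, pk.2.2⟩).2.1,
        (next (g (k + 1)) ⟨pk.1, pk.2.2⟩).2.2.1⟩) k
  refine ⟨fun k => (G k).1, rfl, fun k => (G k).2.1, fun k => (G k).2.2, fun k => ?_⟩
  exact (next (g (k + 1)) ⟨(G k).1, (G k).2.2⟩).2.2.2

/-- Let `H` be a nonzero finite-dimensional complex Hilbert space, `q` a
nonzero closed subspace of `H`, and `P₀, P₁, …` a sequence of partitions of `H`.  Then there
is a sequence of cells `pᵢ ∈ Pᵢ` with consecutive cells not orthogonal and each `pᵢ` not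
orthogonal to `q`; moreover, for any index `n` and prescribed cell `c ∈ Pₙ` not orthogonal
to `q`, such a sequence exists with `pₙ = c`. -/
theorem exists_cell_sequence_not_orth
    [FiniteDimensional ℂ H] [Nontrivial H]
    (q : Submodule ℂ H) (hq : q ≠ ⊥) (hqc : IsClosed (q : Set H))
    (P : ℕ → Set (Submodule ℂ H)) (hP : ∀ i, IsPartition (P i)) :
    (∃ p : ℕ → Submodule ℂ H, (∀ i, p i ∈ P i) ∧
        (∀ i, ¬ Orth (p i) (p (i + 1))) ∧ ∀ i, ¬ Orth (p i) q) ∧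
      ∀ n : ℕ, ∀ c ∈ P n, ¬ Orth c q →
        ∃ p : ℕ → Submodule ℂ H, (∀ i, p i ∈ P i) ∧
          (∀ i, ¬ Orth (p i) (p (i + 1))) ∧ (∀ i, ¬ Orth (p i) q) ∧ p n = c := by
  have main : ∀ n : ℕ, ∀ c ∈ P n, ¬ Orth c q →
      ∃ p : ℕ → Submodule ℂ H, (∀ i, p i ∈ P i) ∧
        (∀ i, ¬ Orth (p i) (p (i + 1))) ∧ (∀ i, ¬ Orth (p i) q) ∧ p n = c := by
    intro n c hc hcq
    obtain ⟨F, hF0, hFmem, hFq, hFcons⟩ :=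
      seq_exists P hP q (fun k => n + k) c (by simpa using hc) hcq
    obtain ⟨B, hB0, hBmem, hBq, hBcons⟩ :=
      seq_exists P hP q (fun k => n - k) c (by simpa using hc) hcq
    refine ⟨fun i => if i ≤ n then B (n - i) else F (i - n), ?_, ?_, ?_, ?_⟩
    · intro i
      by_cases h : i ≤ n
      · simpa [h, Nat.sub_sub_self h] using hBmem (n - i)
      · have h' : ¬ i ≤ n := h
        have : n + (i - n) = i := by omega
        simpa [h', this] using hFmem (i - n)
    · intro i
      rcases lt_trichotomy (i + 1) (n + 1) with h | h | h
      · -- i + 1 ≤ n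
        have h1 : i ≤ n := by omega
        have h2 : i + 1 ≤ n := by omega
        have h3 : n - i = (n - (i + 1)) + 1 := by omega
        simp only [h1, h2, if_pos]
        rw [h3]
        exact hBcons (n - (i + 1))
      · -- i = n
        have hi : i = n := by omega
        subst hi
        have h1 : ¬ (i + 1 ≤ i) := by omega
        have e : i + 1 - i = 1 := by omega
        simp only
        rw [if_pos (le_refl i), if_neg h1, Nat.sub_self, hB0, ← hF0, e]
        exact fun horth => hFcons 0 (orth_symm horth)
      · -- i > n
        have h1 : ¬ (i ≤ n) := by omega
        have h2 : ¬ (i + 1 ≤ n) := by omega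
        have h3 : (i + 1) - n = (i - n) + 1 := by omega
        simp only [h1, h2, if_neg]
        rw [h3]
        exact fun horth => hFcons (i - n) (orth_symm horth)
    · intro i
      by_cases h : i ≤ n
      · simpa [h] using hBq (n - i)
      · simpa [h] using hFq (i - n)
    · simp [hB0]
  refine ⟨?_, main⟩
  have hqq : ¬ Orth q q := by
    intro horth
    obtain ⟨y, hy, hy0⟩ := Submodule.exists_mem_ne_zero_of_ne_bot hq
    exact hy0 (inner_self_eq_zero.mp (horth y hy y hy))
  obtain ⟨c, hc, _, hcq⟩ := key (hP 0) hqq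
  obtain ⟨p, h1, h2, h3, _⟩ := main 0 c hc hcq
  exact ⟨p, h1, h2, h3⟩
end

section
/- Let H be a nonzero finite-dimensional complex Hilbert space, and let P₁, P₂, … be a sequence of partitions of H for which there is a partition Q of H such that, for every n ≥ 1, Q is the least upper bound of {Pᵢ : i ≥ n} in the refinement order. Let r₁ be a multicell of P₁, and for each i ≥ 1 let r_{i+1} be the least multicell of P_{i+1} containing rᵢ. Then r₁ ≤ r₂ ≤ ⋯ is a monotone increasing sequence of subspaces that is eventually constant, and its eventual value is the least multicell of Q containing r₁. -/
set_option linter.unusedSectionVars false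
set_option linter.unusedVariables false
set_option maxHeartbeats 1000000


variable {H : Type*} [NormedAddCommGroup H] [InnerProductSpace ℂ H]

section Helpers
variable [FiniteDimensional ℂ H]

lemma closure_eq' (s : Submodule ℂ H) : s.topologicalClosure = s :=
  IsClosed.submodule_topologicalClosure_eq s.closed_of_finiteDimensional

lemma orth_iff_le {p q : Submodule ℂ H} : Orth p q ↔ p ≤ qᗮ := by
  constructor
  · intro h x hx
    rw [Submodule.mem_orthogonal']
    exact h x hx
  · intro h x hx y hy
    exact (Submodule.mem_orthogonal' q x).mp (h hx) y hy

lemma partition_sSup_top {P : Set (Submodule ℂ H)} (hP : IsPartition P) :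
    sSup P = ⊤ := by
  have := hP.2.2.2
  rwa [closure_eq'] at this

/-- If every cell of a partition is contained in `m` or in `mᗮ`, then `m` is the
sup of the cells it contains; in particular `m` is a multicell. -/
lemma eq_sSup_of_split {P : Set (Submodule ℂ H)} (hP : IsPartition P)
    {m : Submodule ℂ H} (hsplit : ∀ p ∈ P, p ≤ m ∨ p ≤ mᗮ) :
    m = sSup {p ∈ P | p ≤ m} := by
  have hA : sSup {p ∈ P | p ≤ m} ≤ m := sSup_le fun p hp => hp.2
  have hB : sSup {p ∈ P | ¬ p ≤ m} ≤ mᗮ :=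
    sSup_le fun p hp => (hsplit p hp.1).resolve_left hp.2
  have hU : {p ∈ P | p ≤ m} ∪ {p ∈ P | ¬ p ≤ m} = P := by
    ext p; by_cases h : p ≤ m <;> simp [h]
  have htop : sSup {p ∈ P | p ≤ m} ⊔ sSup {p ∈ P | ¬ p ≤ m} = ⊤ := by
    rw [← sSup_union, hU, partition_sSup_top hP]
  refine le_antisymm ?_ hA
  intro x hx
  have hx' : x ∈ sSup {p ∈ P | p ≤ m} ⊔ sSup {p ∈ P | ¬ p ≤ m} := by
    rw [htop]; exact Submodule.mem_top
  obtain ⟨a, ha, b, hb, rfl⟩ := Submodule.mem_sup.mp hx'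
  have hbm : b ∈ m := (Submodule.add_mem_iff_right m (hA ha)).mp hx
  have hb0 : b = 0 := by
    have hmem : b ∈ m ⊓ mᗮ := ⟨hbm, hB hb⟩
    rw [m.inf_orthogonal_eq_bot] at hmem
    exact hmem
  rw [hb0, add_zero]
  exact ha

/-- Cells of a partition split across any multicell of that partition. -/
lemma split_of_multicell {Q : Set (Submodule ℂ H)} (hQ : IsPartition Q)
    {m : Submodule ℂ H} (hm : IsMulticell Q m) :
    ∀ q ∈ Q, q ≤ m ∨ q ≤ mᗮ := by
  obtain ⟨C, hCQ, hm⟩ := hm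
  rw [closure_eq'] at hm
  intro q hq
  by_cases hqC : q ∈ C
  · exact Or.inl (hm ▸ le_sSup hqC)
  · right
    have hle : m ≤ qᗮ := by
      rw [hm]
      refine sSup_le fun c hc => orth_iff_le.mp ?_
      exact hQ.2.2.1 c (hCQ hc) q hq (fun h => hqC (h ▸ hc))
    exact le_trans (Submodule.le_orthogonal_orthogonal _) (Submodule.orthogonal_le hle)

/-- A multicell of `Q` is a multicell of any partition refining `Q`. -/
lemma multicell_of_refines {P Q : Set (Submodule ℂ H)} (hP : IsPartition P)
    (hQ : IsPartition Q) (href : Refines P Q) {m : Submodule ℂ H}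
    (hm : IsMulticell Q m) : IsMulticell P m := by
  have hsplit : ∀ p ∈ P, p ≤ m ∨ p ≤ mᗮ := by
    intro p hp
    obtain ⟨q, hqQ, hpq⟩ := href p hp
    rcases split_of_multicell hQ hm q hqQ with h | h
    · exact Or.inl (hpq.trans h)
    · exact Or.inr (hpq.trans h)
  exact ⟨{p ∈ P | p ≤ m}, fun p hp => hp.1, by
    rw [closure_eq']; exact eq_sSup_of_split hP hsplit⟩

/-- `{m, mᗮ}` with `⊥` removed is a partition. -/
lemma pair_partition [Nontrivial H] (m : Submodule ℂ H) :
    IsPartition ({m, mᗮ} \ {⊥} : Set (Submodule ℂ H)) := by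
  have hsup : m ⊔ mᗮ = ⊤ := Submodule.sup_orthogonal_of_hasOrthogonalProjection
  refine ⟨fun p hp => hp.2, fun p hp => ?_, fun p hp q hq hne => ?_, ?_⟩
  · exact p.closed_of_finiteDimensional
  · -- pairwise orthogonality
    rcases hp.1 with rfl | rfl <;> rcases hq.1 with rfl | rfl
    · exact absurd rfl hne
    · exact orth_iff_le.mpr (Submodule.le_orthogonal_orthogonal _)
    · exact orth_iff_le.mpr le_rfl
    · exact absurd rfl hne
  · rw [closure_eq', eq_top_iff, ← hsup]
    refine sup_le ?_ ?_
    · by_cases hm : m = ⊥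
      · simp [hm]
      · exact le_sSup ⟨Or.inl rfl, hm⟩
    · by_cases hm : mᗮ = ⊥
      · simp [hm]
      · exact le_sSup ⟨Or.inr rfl, hm⟩

end Helpers

/-- Let `H` be a nonzero finite-dimensional complex Hilbert space and
`P₀, P₁, …` a sequence of partitions of `H` admitting a partition `Q` that, for every `n`,
is the least upper bound of `{Pᵢ : i ≥ n}` in the refinement order.  Let `r₀` be a multicell
of `P₀` and let each `r (i+1)` be the least multicell of `P (i+1)` containing `r i`.  Then
`r` is a monotone increasing sequence of subspaces that is eventually constant, and its
eventual value is the least multicell of `Q` containing `r₀`. -/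
theorem least_multicell_sequence_stabilizes
    [FiniteDimensional ℂ H] [Nontrivial H]
    (P : ℕ → Set (Submodule ℂ H)) (hP : ∀ i, IsPartition (P i))
    (Q : Set (Submodule ℂ H)) (hQ : IsPartition Q)
    (hQlub : ∀ n : ℕ, (∀ i, n ≤ i → Refines (P i) Q) ∧
      ∀ Q' : Set (Submodule ℂ H), IsPartition Q' →
        (∀ i, n ≤ i → Refines (P i) Q') → Refines Q Q')
    (r : ℕ → Submodule ℂ H)
    (hr0 : IsMulticell (P 0) (r 0))
    (hrmc : ∀ i, IsMulticell (P (i + 1)) (r (i + 1)))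
    (hrle : ∀ i, r i ≤ r (i + 1))
    (hrleast : ∀ i m, IsMulticell (P (i + 1)) m → r i ≤ m → r (i + 1) ≤ m) :
    Monotone r ∧
      ∃ N : ℕ, (∀ n, N ≤ n → r n = r N) ∧ IsMulticell Q (r N) ∧ r 0 ≤ r N ∧
        ∀ m, IsMulticell Q m → r 0 ≤ m → r N ≤ m := by
  have hmono : Monotone r := monotone_nat_of_le_succ hrle
  -- stabilization via finrank
  have hbdd : ∀ n, Module.finrank ℂ (r n) ≤ Module.finrank ℂ H :=
    fun n => Submodule.finrank_le _
  obtain ⟨N, hN⟩ : ∃ N, ∀ n, Module.finrank ℂ (r n) ≤ Module.finrank ℂ (r N) := by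
    have hbdd' : BddAbove (Set.range fun n => Module.finrank ℂ (r n)) :=
      ⟨Module.finrank ℂ H, by rintro x ⟨n, rfl⟩; exact hbdd n⟩
    obtain ⟨N, hNmem⟩ := Nat.sSup_mem (Set.range_nonempty _) hbdd'
    exact ⟨N, fun n => le_of_le_of_eq (le_csSup hbdd' ⟨n, rfl⟩) hNmem.symm⟩
  have hstab : ∀ n, N ≤ n → r n = r N := by
    intro n hn
    exact (Submodule.eq_of_le_of_finrank_le (hmono hn)
      (hN n)).symm
  refine ⟨hmono, N, hstab, ?_, hmono (Nat.zero_le N), ?_⟩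
  · -- r N is a multicell of Q
    have hmcPi : ∀ i, N + 1 ≤ i → IsMulticell (P i) (r N) := by
      intro i hi
      cases i with
      | zero => omega
      | succ k =>
        have := hrmc k
        rwa [hstab (k + 1) (by omega)] at this
    set m := r N
    have hsplitQ : ∀ q ∈ Q, q ≤ m ∨ q ≤ mᗮ := by
      have hrefQ : Refines Q ({m, mᗮ} \ {⊥}) := by
        refine (hQlub (N + 1)).2 _ (pair_partition m) ?_
        intro i hi p hp
        rcases split_of_multicell (hP i) (hmcPi i hi) p hp with h | h
        · exact ⟨m, ⟨Or.inl rfl, fun hb => (hP i).1 p hp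
            (le_bot_iff.mp (Set.mem_singleton_iff.mp hb ▸ h))⟩, h⟩
        · exact ⟨mᗮ, ⟨Or.inr rfl, fun hb => (hP i).1 p hp
            (le_bot_iff.mp (Set.mem_singleton_iff.mp hb ▸ h))⟩, h⟩
      intro q hq
      obtain ⟨c, hc, hqc⟩ := hrefQ q hq
      rcases hc.1 with rfl | rfl
      · exact Or.inl hqc
      · exact Or.inr hqc
    exact ⟨{q ∈ Q | q ≤ m}, fun q hq => hq.1, by
      rw [closure_eq']; exact eq_sSup_of_split hQ hsplitQ⟩
  · -- minimality
    intro m hm hle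
    have key : ∀ i, r i ≤ m := by
      intro i
      induction i with
      | zero => exact hle
      | succ k ih =>
        exact hrleast k m
          (multicell_of_refines (hP (k + 1)) hQ ((hQlub (k + 1)).1 (k + 1) le_rfl) hm) ih
    exact key N
end

section
/- Let (S, ⊑) be a cpo, let H be a nonzero finite-dimensional complex Hilbert space, and let (Pᵢ, fᵢ)_{i≥1} be a monotone S-labeled sequence of partitions of H. Then for every s₀ ∈ S and all indices i ≤ j, one has ⨆{ q ∈ Pⱼ : fⱼ(q) ⊑ s₀ } ≤ ⨆{ p ∈ Pᵢ : fᵢ(p) ⊑ s₀ } in the lattice of closed subspaces of H. -/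
variable {H : Type*} [NormedAddCommGroup H] [InnerProductSpace ℂ H]

variable {S : Type*} [PartialOrder S]

/-- A monotone `S`-labeled sequence of partitions of `H`: a sequence `P i` of partitions
together with labelings `f i` of their cells such that for `i ≤ j` and non-orthogonal cells
`p ∈ P i`, `q ∈ P j` one has `f i p ⊑ f j q`. -/
def MonotoneLabeled (P : ℕ → Set (Submodule ℂ H)) (f : ℕ → Submodule ℂ H → S) : Prop :=
  ∀ i j : ℕ, i ≤ j → ∀ p ∈ P i, ∀ q ∈ P j, ¬ Orth p q → f i p ≤ f j q

/-- A partition `Pinf` is the eventual supremum of the sequence `P` if, for all sufficiently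
large `n`, `Pinf` is the least upper bound of `{P i : i ≥ n}` in the refinement order. -/
def IsEventualSup (P : ℕ → Set (Submodule ℂ H)) (Pinf : Set (Submodule ℂ H)) : Prop :=
  ∃ N : ℕ, ∀ n, N ≤ n →
    (∀ i, n ≤ i → Refines (P i) Pinf) ∧
      ∀ Q : Set (Submodule ℂ H), IsPartition Q →
        (∀ i, n ≤ i → Refines (P i) Q) → Refines Pinf Q

/-- Let `S` be a cpo, `H` a nonzero finite-dimensional complex Hilbert
space, and `(P i, f i)` a monotone `S`-labeled sequence of partitions of `H`.  Then for every
`s₀ ∈ S` and indices `i ≤ j`, `⨆ {q ∈ P j | f j q ⊑ s₀} ≤ ⨆ {p ∈ P i | f i p ⊑ s₀}` in the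
lattice of closed subspaces of `H`. -/
theorem labeled_sup_antitone
    (hcpo : ∀ g : ℕ → S, Monotone g → ∃ s, IsLUB (Set.range g) s)
    [FiniteDimensional ℂ H] [Nontrivial H]
    (P : ℕ → Set (Submodule ℂ H)) (hP : ∀ i, IsPartition (P i))
    (f : ℕ → Submodule ℂ H → S) (hf : MonotoneLabeled P f)
    (s₀ : S) (i j : ℕ) (hij : i ≤ j) :
    (sSup {q ∈ P j | f j q ≤ s₀}).topologicalClosure ≤
      (sSup {p ∈ P i | f i p ≤ s₀}).topologicalClosure := by
  have hclos : ∀ K : Submodule ℂ H, K.topologicalClosure = K := fun K =>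
    le_antisymm (Submodule.topologicalClosure_minimal K le_rfl
      (Submodule.closed_of_finiteDimensional K)) K.le_topologicalClosure
  set good : Set (Submodule ℂ H) := {p ∈ P i | f i p ≤ s₀} with hgood
  set bad : Set (Submodule ℂ H) := {p ∈ P i | ¬ f i p ≤ s₀} with hbad
  have htop : sSup good ⊔ sSup bad = ⊤ := by
    rw [← sSup_union]
    have : good ∪ bad = P i := by
      ext p; simp only [hgood, hbad, Set.mem_union, Set.mem_setOf_eq]
      constructor
      · rintro (⟨h, _⟩ | ⟨h, _⟩) <;> exact h
      · intro h; by_cases hc : f i p ≤ s₀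
        · exact Or.inl ⟨h, hc⟩
        · exact Or.inr ⟨h, hc⟩
    rw [this, ← hclos (sSup (P i)), (hP i).2.2.2]
  have hgb : sSup good ≤ (sSup bad)ᗮ := by
    apply sSup_le
    rintro p ⟨hpP, hps⟩
    intro x hx
    rw [Submodule.mem_orthogonal]
    intro u hu
    have : sSup bad ≤ pᗮ := by
      apply sSup_le
      rintro b ⟨hbP, hbs⟩ y hy
      rw [Submodule.mem_orthogonal]
      intro z hz
      have hne : p ≠ b := fun h => hbs (h ▸ hps)
      exact (hP i).2.2.1 p hpP b hbP hne z hz y hy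
    exact inner_eq_zero_symm.mp ((Submodule.mem_orthogonal p u).mp (this hu) x hx)
  have hbot : sSup bad ⊓ (sSup bad)ᗮ = ⊥ := (Submodule.orthogonal_disjoint _).eq_bot
  have hkey : (sSup bad)ᗮ = sSup good := by
    have := sup_inf_assoc_of_le (x := sSup good) (sSup bad) hgb
    rw [htop, top_inf_eq, hbot, sup_bot_eq] at this
    exact this
  apply Submodule.topologicalClosure_mono
  apply sSup_le
  rintro q ⟨hqP, hqs⟩
  rw [← hkey]
  intro x hx
  rw [Submodule.mem_orthogonal]
  intro u hu
  have : sSup bad ≤ qᗮ := by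
    apply sSup_le
    rintro b ⟨hbP, hbs⟩ y hy
    rw [Submodule.mem_orthogonal]
    intro z hz
    have horth : Orth b q := by
      by_contra hno
      exact hbs (le_trans (hf i j hij b hbP q hqP hno) hqs)
    exact inner_eq_zero_symm.mp (horth y hy z hz)
  exact inner_eq_zero_symm.mp ((Submodule.mem_orthogonal q u).mp (this hu) x hx)
end

section
/- Let (S, ⊑) be a cpo, let H be a nonzero finite-dimensional complex Hilbert space, let (Pᵢ, fᵢ)_{i≥1} be a monotone S-labeled sequence of partitions of H, let P∞ be the eventual supremum of (Pᵢ), and let f∞ : P∞ → S be a limit labeling for this data. Then for every positive integer n, every cell p ∈ Pₙ, and every cell p∞ ∈ P∞, if p is not orthogonal to p∞ then fₙ(p) ⊑ f∞(p∞). -/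
variable {H : Type*} [NormedAddCommGroup H] [InnerProductSpace ℂ H]

variable {S : Type*} [PartialOrder S]

/-- A limit labeling `finf : Pinf → S` for a monotone `S`-labeled sequence of partitions:
for every cell `pinf ∈ Pinf` and every sequence of cells `p i ∈ P i` with consecutive cells
not orthogonal and each `p i` not orthogonal to `pinf`, `finf pinf` is the supremum of the
(monotone increasing) sequence `f i (p i)`. -/
def IsLimitLabeling (P : ℕ → Set (Submodule ℂ H)) (f : ℕ → Submodule ℂ H → S)
    (Pinf : Set (Submodule ℂ H)) (finf : Submodule ℂ H → S) : Prop :=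
  ∀ pinf ∈ Pinf, ∀ p : ℕ → Submodule ℂ H, (∀ i, p i ∈ P i) →
    (∀ i, ¬ Orth (p i) (p (i + 1))) → (∀ i, ¬ Orth (p i) pinf) →
      IsLUB (Set.range fun i => f i (p i)) (finf pinf)

/-- Key lemma: if `Q` is a partition of a finite-dimensional space and `⟪w, v⟫ ≠ 0`,
then some cell `c` of `Q` contains a vector `z` with `⟪w, z⟫ ≠ 0` and `⟪z, v⟫ ≠ 0`. -/
lemma exists_cell_not_orth [FiniteDimensional ℂ H] {Q : Set (Submodule ℂ H)}
    (hQ : IsPartition Q) {w v : H} (hwv : (inner ℂ w v : ℂ) ≠ 0) :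
    ∃ cz : Submodule ℂ H × H, cz.1 ∈ Q ∧ cz.2 ∈ cz.1 ∧
      (inner ℂ w cz.2 : ℂ) ≠ 0 ∧ (inner ℂ cz.2 v : ℂ) ≠ 0 := by
  classical
  have hsup : sSup Q = ⊤ := by
    have hcl : IsClosed ((sSup Q : Submodule ℂ H) : Set H) :=
      Submodule.closed_of_finiteDimensional _
    rw [← hcl.submodule_topologicalClosure_eq]
    exact hQ.2.2.2
  have hv : v ∈ ⨆ c : Q, (c : Submodule ℂ H) := by
    rw [← sSup_eq_iSup', hsup]; trivial
  obtain ⟨g, hg, hgv⟩ := (Submodule.mem_iSup_iff_exists_finsupp _ v).mp hv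
  have hsum : (inner ℂ w v : ℂ) = ∑ c ∈ g.support, (inner ℂ w (g c) : ℂ) := by
    rw [← hgv, Finsupp.sum, inner_sum]
  rw [hsum] at hwv
  obtain ⟨c₀, hc₀mem, hc₀⟩ := Finset.exists_ne_zero_of_sum_ne_zero hwv
  have hz0 : g c₀ ≠ 0 := fun h => hc₀ (by rw [h, inner_zero_right])
  refine ⟨((c₀ : Submodule ℂ H), g c₀), c₀.2, hg c₀, hc₀, ?_⟩
  have : (inner ℂ (g c₀) v : ℂ) = ∑ c ∈ g.support, (inner ℂ (g c₀) (g c) : ℂ) := by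
    rw [← hgv, Finsupp.sum, inner_sum]
  rw [this, Finset.sum_eq_single_of_mem c₀ hc₀mem]
  · exact inner_self_ne_zero.mpr hz0
  · intro c _ hne
    have hne' : (c : Submodule ℂ H) ≠ (c₀ : Submodule ℂ H) :=
      fun h => hne (Subtype.coe_injective h)
    exact hQ.2.2.1 _ c₀.2 _ c.2 hne'.symm (g c₀) (hg c₀) (g c) (hg c)

/-- Let `S` be a cpo, `H` a nonzero finite-dimensional complex Hilbert
space, `(P i, f i)` a monotone `S`-labeled sequence of partitions of `H`, `Pinf` the eventual
supremum of `(P i)`, and `finf` a limit labeling.  Then for every `n`, every cell `p ∈ P n`,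
and every cell `pinf ∈ Pinf`, if `p` is not orthogonal to `pinf` then `f n p ⊑ finf pinf`. -/
theorem label_le_limit_label
    (hcpo : ∀ g : ℕ → S, Monotone g → ∃ s, IsLUB (Set.range g) s)
    [FiniteDimensional ℂ H] [Nontrivial H]
    (P : ℕ → Set (Submodule ℂ H)) (hP : ∀ i, IsPartition (P i))
    (f : ℕ → Submodule ℂ H → S) (hf : MonotoneLabeled P f)
    (Pinf : Set (Submodule ℂ H)) (hPinf : IsPartition Pinf)
    (hev : IsEventualSup P Pinf)
    (finf : Submodule ℂ H → S) (hfinf : IsLimitLabeling P f Pinf finf)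
    (n : ℕ) (p : Submodule ℂ H) (hp : p ∈ P n)
    (pinf : Submodule ℂ H) (hpinf : pinf ∈ Pinf)
    (horth : ¬ Orth p pinf) :
    f n p ≤ finf pinf := by
  classical
  -- extract witnessing vectors
  unfold Orth at horth
  push_neg at horth
  obtain ⟨x, hxp, u, hupinf, hxu⟩ := horth
  -- the cell-type carrying the invariant
  let T : ℕ → Type _ := fun i =>
    {cw : Submodule ℂ H × H // cw.1 ∈ P i ∧ cw.2 ∈ cw.1 ∧ (inner ℂ cw.2 u : ℂ) ≠ 0}
  -- one step of the chain construction
  have step : ∀ (i : ℕ) (w : H), (inner ℂ w u : ℂ) ≠ 0 →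
      ∃ cz : Submodule ℂ H × H, cz.1 ∈ P i ∧ cz.2 ∈ cz.1 ∧
        (inner ℂ w cz.2 : ℂ) ≠ 0 ∧ (inner ℂ cz.2 u : ℂ) ≠ 0 :=
    fun i w hw => exists_cell_not_orth (hP i) hw
  let nxt : ∀ (i : ℕ) (w : H), (inner ℂ w u : ℂ) ≠ 0 →
      {cz : Submodule ℂ H × H // cz.1 ∈ P i ∧ cz.2 ∈ cz.1 ∧
        (inner ℂ w cz.2 : ℂ) ≠ 0 ∧ (inner ℂ cz.2 u : ℂ) ≠ 0} :=
    fun i w hw => ⟨(step i w hw).choose, (step i w hw).choose_spec⟩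
  -- forward chain from index n
  let fwd : ∀ k : ℕ, T (n + k) := fun k =>
    Nat.rec (motive := fun k => T (n + k)) ⟨(p, x), hp, hxp, hxu⟩
      (fun k ih =>
        let r := nxt (n + k + 1) ih.val.2 ih.prop.2.2
        ⟨r.val, r.prop.1, r.prop.2.1, r.prop.2.2.2⟩) k
  have hlinkf : ∀ k, (inner ℂ (fwd k).val.2 (fwd (k + 1)).val.2 : ℂ) ≠ 0 := fun k =>
    (nxt (n + k + 1) (fwd k).val.2 (fwd k).prop.2.2).prop.2.2.1
  -- backward chain from index n
  let bwd : ∀ k : ℕ, T (n - k) := fun k =>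
    Nat.rec (motive := fun k => T (n - k)) ⟨(p, x), hp, hxp, hxu⟩
      (fun k ih =>
        let r := nxt (n - (k + 1)) ih.val.2 ih.prop.2.2
        ⟨r.val, r.prop.1, r.prop.2.1, r.prop.2.2.2⟩) k
  have hlinkb : ∀ k, (inner ℂ (bwd k).val.2 (bwd (k + 1)).val.2 : ℂ) ≠ 0 := fun k =>
    (nxt (n - (k + 1)) (bwd k).val.2 (bwd k).prop.2.2).prop.2.2.1
  -- congruence helpers for index arithmetic
  have memP : ∀ {a b : ℕ}, a = b → ∀ t : T a, t.val.1 ∈ P b := by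
    rintro a b rfl t; exact t.prop.1
  have bwd_congr : ∀ {a b : ℕ}, a = b → (bwd a).val = (bwd b).val := by
    rintro a b rfl; rfl
  have fwd_congr : ∀ {a b : ℕ}, a = b → (fwd a).val = (fwd b).val := by
    rintro a b rfl; rfl
  -- assemble the full chain
  let q : ℕ → Submodule ℂ H := fun i => if i ≤ n then (bwd (n - i)).val.1 else (fwd (i - n)).val.1
  let wv : ℕ → H := fun i => if i ≤ n then (bwd (n - i)).val.2 else (fwd (i - n)).val.2
  have hqmem : ∀ i, q i ∈ P i := by
    intro i
    by_cases h : i ≤ n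
    · simp only [q, h, if_true]
      exact memP (Nat.sub_sub_self h) _
    · simp only [q, h, if_false]
      exact memP (Nat.add_sub_cancel' (le_of_not_ge h)) _
  have hwvq : ∀ i, wv i ∈ q i := by
    intro i
    by_cases h : i ≤ n
    · simp only [q, wv, h, if_true]; exact (bwd (n - i)).prop.2.1
    · simp only [q, wv, h, if_false]; exact (fwd (i - n)).prop.2.1
  have hwvu : ∀ i, (inner ℂ (wv i) u : ℂ) ≠ 0 := by
    intro i
    by_cases h : i ≤ n
    · simp only [wv, h, if_true]; exact (bwd (n - i)).prop.2.2
    · simp only [wv, h, if_false]; exact (fwd (i - n)).prop.2.2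
  have hqn : q n = p := by
    simp only [q, le_refl, if_true]
    rw [bwd_congr (Nat.sub_self n)]
    rfl
  have hwvfwd : ∀ i, n ≤ i → wv i = (fwd (i - n)).val.2 := by
    intro i hni
    by_cases h : i ≤ n
    · have hin : i = n := le_antisymm h hni
      subst hin
      simp only [wv, le_refl, if_true]
      rw [bwd_congr (Nat.sub_self i), fwd_congr (Nat.sub_self i)]
      rfl
    · simp only [wv, h, if_false]
  -- consecutive cells are not orthogonal
  have hconsec : ∀ i, ¬ Orth (q i) (q (i + 1)) := by
    intro i hor
    have h1 := hor (wv i) (hwvq i) (wv (i + 1)) (hwvq (i + 1))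
    by_cases h : i + 1 ≤ n
    · have hi : i ≤ n := le_trans (Nat.le_succ i) h
      have hwi : wv i = (bwd ((n - (i + 1)) + 1)).val.2 := by
        simp only [wv, hi, if_true]
        rw [bwd_congr (show n - i = (n - (i + 1)) + 1 by omega)]
      have hwi1 : wv (i + 1) = (bwd (n - (i + 1))).val.2 := by
        simp only [wv, h, if_true]
      have h2 : (inner ℂ (wv (i + 1)) (wv i) : ℂ) = 0 := inner_eq_zero_symm.mp h1
      rw [hwi, hwi1] at h2
      exact hlinkb (n - (i + 1)) h2
    · have hn : n ≤ i := by omega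
      have hwi := hwvfwd i hn
      have hwi1 : wv (i + 1) = (fwd ((i - n) + 1)).val.2 := by
        rw [hwvfwd (i + 1) (le_trans hn (Nat.le_succ i)),
          fwd_congr (show i + 1 - n = (i - n) + 1 by omega)]
      rw [hwi, hwi1] at h1
      exact hlinkf (i - n) h1
  -- each cell of the chain is not orthogonal to pinf
  have hqpinf : ∀ i, ¬ Orth (q i) pinf := fun i hor =>
    hwvu i (hor (wv i) (hwvq i) u hupinf)
  -- apply the limit labeling
  have hl := hfinf pinf hpinf q hqmem hconsec hqpinf
  have h2 : f n (q n) ≤ finf pinf := hl.1 ⟨n, rfl⟩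
  rwa [hqn] at h2
end

section
/- Let (S, ⊑) be a cpo, let H be a nonzero finite-dimensional complex Hilbert space, let (Pᵢ, fᵢ)_{i≥1} be a monotone S-labeled sequence of partitions of H, let P∞ be the eventual supremum of (Pᵢ), and let f∞ : P∞ → S be a limit labeling for this data. Then for every s₀ ∈ S, the following equality of closed subspaces of H holds: ⨅_{n≥1} ⨆{ p ∈ Pₙ : fₙ(p) ⊑ s₀ } = ⨆{ p ∈ P∞ : f∞(p) ⊑ s₀ }. -/
variable {H : Type*} [NormedAddCommGroup H] [InnerProductSpace ℂ H]

variable {S : Type*} [PartialOrder S]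

local notation "⟪" x ", " y "⟫" => @inner ℂ H _ x y

lemma tc_eq [FiniteDimensional ℂ H] (p : Submodule ℂ H) : p.topologicalClosure = p :=
  IsClosed.submodule_topologicalClosure_eq (Submodule.closed_of_finiteDimensional p)

lemma mem_sSup_decomp {C : Set (Submodule ℂ H)} {v : H} (hv : v ∈ sSup C) :
    ∃ g : C →₀ H, (∀ c : C, g c ∈ (c : Submodule ℂ H)) ∧ (g.sum fun _ x => x) = v := by
  rw [sSup_eq_iSup'] at hv
  exact (Submodule.mem_iSup_iff_exists_finsupp _ _).mp hv

lemma decomp_inner_eq {C : Set (Submodule ℂ H)}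
    (horth : ∀ p ∈ C, ∀ q ∈ C, p ≠ q → Orth p q)
    (g : C →₀ H) (hg : ∀ c : C, g c ∈ (c : Submodule ℂ H)) (c : C) {x : H}
    (hx : x ∈ (c : Submodule ℂ H)) :
    ⟪x, g.sum fun _ y => y⟫ = ⟪x, g c⟫ := by
  classical
  rw [Finsupp.sum, inner_sum]
  by_cases hc : c ∈ g.support
  · refine Finset.sum_eq_single_of_mem c hc fun r _ hrc => ?_
    exact horth c.1 c.2 r.1 r.2 (fun h => hrc (Subtype.ext h.symm)) x hx (g r) (hg r)
  · rw [Finsupp.notMem_support_iff.mp hc, inner_zero_right]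
    refine Finset.sum_eq_zero fun r hr => ?_
    exact horth c.1 c.2 r.1 r.2 (fun h => hc (Subtype.ext h ▸ hr)) x hx (g r) (hg r)

lemma partition_step [FiniteDimensional ℂ H] {Q : Set (Submodule ℂ H)} (hQ : IsPartition Q)
    {u w : H} (h : ⟪w, u⟫ ≠ 0) :
    ∃ q ∈ Q, ∃ w' : H, w' ∈ q ∧ ⟪w', u⟫ ≠ 0 ∧ ⟪w', w⟫ ≠ 0 := by
  have hw : w ∈ sSup Q := by
    rw [← tc_eq (sSup Q), hQ.2.2.2]; trivial
  obtain ⟨g, hg, hgsum⟩ := mem_sSup_decomp hw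
  have hsum : (g.sum fun _ x => ⟪x, u⟫) = ⟪w, u⟫ := by
    rw [← hgsum, Finsupp.sum, Finsupp.sum, sum_inner]
  have : ∃ c ∈ g.support, ⟪g c, u⟫ ≠ 0 := by
    by_contra hcon
    push_neg at hcon
    exact h (by rw [← hsum, Finsupp.sum]; exact Finset.sum_eq_zero hcon)
  obtain ⟨c, _, hc⟩ := this
  refine ⟨c.1, c.2, g c, hg c, hc, ?_⟩
  have hself : ⟪g c, w⟫ = ⟪g c, g c⟫ := by
    rw [← hgsum]; exact decomp_inner_eq hQ.2.2.1 g hg c (hg c)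
  rw [hself]
  exact fun h0 => hc (by rw [inner_self_eq_zero.mp h0, inner_zero_left])

open Classical in
noncomputable def pickCell (Q : Set (Submodule ℂ H)) (u w : H) : Submodule ℂ H × H :=
  if h : ∃ q ∈ Q, ∃ w' : H, w' ∈ q ∧ ⟪w', u⟫ ≠ 0 ∧ ⟪w', w⟫ ≠ 0 then
    (h.choose, h.choose_spec.2.choose)
  else (⊥, 0)

lemma pickCell_spec {Q : Set (Submodule ℂ H)} {u w : H}
    (hex : ∃ q ∈ Q, ∃ w' : H, w' ∈ q ∧ ⟪w', u⟫ ≠ 0 ∧ ⟪w', w⟫ ≠ 0) :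
    (pickCell Q u w).1 ∈ Q ∧ (pickCell Q u w).2 ∈ (pickCell Q u w).1 ∧
      ⟪(pickCell Q u w).2, u⟫ ≠ 0 ∧ ⟪(pickCell Q u w).2, w⟫ ≠ 0 := by
  rw [pickCell, dif_pos hex]
  exact ⟨hex.choose_spec.1, hex.choose_spec.2.choose_spec⟩

noncomputable def chainAux (P : ℕ → Set (Submodule ℂ H)) (idx : ℕ → ℕ) (u : H)
    (base : Submodule ℂ H × H) : ℕ → Submodule ℂ H × H
  | 0 => base
  | k + 1 => pickCell (P (idx (k + 1))) u (chainAux P idx u base k).2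

lemma chainAux_spec [FiniteDimensional ℂ H] {P : ℕ → Set (Submodule ℂ H)}
    (hP : ∀ i, IsPartition (P i)) (idx : ℕ → ℕ) (u : H) (base : Submodule ℂ H × H)
    (hbase : base.1 ∈ P (idx 0) ∧ base.2 ∈ base.1 ∧ ⟪base.2, u⟫ ≠ 0) :
    ∀ k, (chainAux P idx u base k).1 ∈ P (idx k) ∧
      (chainAux P idx u base k).2 ∈ (chainAux P idx u base k).1 ∧
      ⟪(chainAux P idx u base k).2, u⟫ ≠ 0 := by
  intro k
  induction k with
  | zero => exact hbase
  | succ k ih =>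
    have hex := partition_step (hP (idx (k + 1))) ih.2.2
    have := pickCell_spec hex
    exact ⟨this.1, this.2.1, this.2.2.1⟩

lemma chainAux_succ [FiniteDimensional ℂ H] {P : ℕ → Set (Submodule ℂ H)}
    (hP : ∀ i, IsPartition (P i)) (idx : ℕ → ℕ) (u : H) (base : Submodule ℂ H × H)
    (hbase : base.1 ∈ P (idx 0) ∧ base.2 ∈ base.1 ∧ ⟪base.2, u⟫ ≠ 0) (k : ℕ) :
    ⟪(chainAux P idx u base (k + 1)).2, (chainAux P idx u base k).2⟫ ≠ 0 := by
  have hex := partition_step (hP (idx (k + 1))) (chainAux_spec hP idx u base hbase k).2.2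
  exact (pickCell_spec hex).2.2.2

lemma exists_chain [FiniteDimensional ℂ H] {P : ℕ → Set (Submodule ℂ H)}
    (hP : ∀ i, IsPartition (P i)) {u : H} (n : ℕ) {q₀ : Submodule ℂ H} {w₀ : H}
    (hq₀ : q₀ ∈ P n) (hw₀ : w₀ ∈ q₀) (hwu : ⟪w₀, u⟫ ≠ 0) :
    ∃ (p : ℕ → Submodule ℂ H) (w : ℕ → H), p n = q₀ ∧ (∀ i, p i ∈ P i) ∧
      (∀ i, w i ∈ p i) ∧ (∀ i, ⟪w i, u⟫ ≠ 0) ∧ (∀ i, ¬ Orth (p i) (p (i + 1))) := by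
  classical
  set base : Submodule ℂ H × H := (q₀, w₀) with hbase_def
  have hbase : base.1 ∈ P n ∧ base.2 ∈ base.1 ∧ ⟪base.2, u⟫ ≠ 0 := ⟨hq₀, hw₀, hwu⟩
  set up : ℕ → Submodule ℂ H × H := chainAux P (fun k => n + k) u base with hup_def
  set dn : ℕ → Submodule ℂ H × H := chainAux P (fun k => n - k) u base with hdn_def
  have hupspec : ∀ k, (up k).1 ∈ P (n + k) ∧ (up k).2 ∈ (up k).1 ∧ ⟪(up k).2, u⟫ ≠ 0 :=
    chainAux_spec hP (fun k => n + k) u base hbase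
  have hdnspec : ∀ k, (dn k).1 ∈ P (n - k) ∧ (dn k).2 ∈ (dn k).1 ∧ ⟪(dn k).2, u⟫ ≠ 0 :=
    chainAux_spec hP (fun k => n - k) u base hbase
  set fc : ℕ → Submodule ℂ H × H := fun i => if n ≤ i then up (i - n) else dn (n - i)
    with hfc_def
  have hfc_up : ∀ i, n ≤ i → fc i = up (i - n) := fun i h => by
    simp only [hfc_def, if_pos h]
  have hfc_dn : ∀ i, i ≤ n → fc i = dn (n - i) := by
    intro i hi
    by_cases h : n ≤ i
    · have hin : i = n := le_antisymm hi h
      subst hin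
      simp only [hfc_def, if_pos h, Nat.sub_self]
      rfl
    · simp only [hfc_def, if_neg h]
  refine ⟨fun i => (fc i).1, fun i => (fc i).2, ?_, ?_, ?_, ?_, ?_⟩
  · show (fc n).1 = q₀
    rw [hfc_dn n le_rfl, Nat.sub_self]
    rfl
  · intro i
    show (fc i).1 ∈ P i
    by_cases h : n ≤ i
    · rw [hfc_up i h]
      have := (hupspec (i - n)).1
      rwa [show n + (i - n) = i by omega] at this
    · rw [hfc_dn i (by omega)]
      have := (hdnspec (n - i)).1
      rwa [show n - (n - i) = i by omega] at this
  · intro i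
    show (fc i).2 ∈ (fc i).1
    by_cases h : n ≤ i
    · rw [hfc_up i h]; exact (hupspec (i - n)).2.1
    · rw [hfc_dn i (by omega)]; exact (hdnspec (n - i)).2.1
  · intro i
    show ⟪(fc i).2, u⟫ ≠ 0
    by_cases h : n ≤ i
    · rw [hfc_up i h]; exact (hupspec (i - n)).2.2
    · rw [hfc_dn i (by omega)]; exact (hdnspec (n - i)).2.2
  · intro i hOrth
    have hOrth' : Orth (fc i).1 (fc (i + 1)).1 := hOrth
    by_cases h : n ≤ i
    · have e1 : fc i = up (i - n) := hfc_up i h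
      have e2 : fc (i + 1) = up (i - n + 1) := by
        rw [hfc_up (i + 1) (by omega)]
        try congr 1
        try omega
      have hne := chainAux_succ hP (fun k => n + k) u base hbase (i - n)
      have m1 : (up (i - n)).2 ∈ (fc i).1 := by rw [e1]; exact (hupspec _).2.1
      have m2 : (up (i - n + 1)).2 ∈ (fc (i + 1)).1 := by rw [e2]; exact (hupspec _).2.1
      exact hne (inner_eq_zero_symm.mp (hOrth' _ m1 _ m2))
    · have e1 : fc i = dn (n - i - 1 + 1) := by
        rw [hfc_dn i (by omega)]
        try congr 1
        try omega
      have e2 : fc (i + 1) = dn (n - i - 1) := by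
        rw [hfc_dn (i + 1) (by omega)]
        try congr 1
        try omega
      have hne := chainAux_succ hP (fun k => n - k) u base hbase (n - i - 1)
      have m1 : (dn (n - i - 1 + 1)).2 ∈ (fc i).1 := by rw [e1]; exact (hdnspec _).2.1
      have m2 : (dn (n - i - 1)).2 ∈ (fc (i + 1)).1 := by rw [e2]; exact (hdnspec _).2.1
      exact hne (hOrth' _ m1 _ m2)

/-- Let `S` be a cpo, `H` a nonzero finite-dimensional complex Hilbert
space, `(P i, f i)` a monotone `S`-labeled sequence of partitions of `H`, `Pinf` the eventual
supremum of `(P i)`, and `finf` a limit labeling.  Then for every `s₀ ∈ S`, in the complete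
lattice of closed subspaces of `H`,
`⨅ n, ⨆ {p ∈ P n | f n p ⊑ s₀} = ⨆ {p ∈ Pinf | finf p ⊑ s₀}`. -/
theorem iInf_labeled_sup_eq_limit_sup
    (hcpo : ∀ g : ℕ → S, Monotone g → ∃ s, IsLUB (Set.range g) s)
    [FiniteDimensional ℂ H] [Nontrivial H]
    (P : ℕ → Set (Submodule ℂ H)) (hP : ∀ i, IsPartition (P i))
    (f : ℕ → Submodule ℂ H → S) (hf : MonotoneLabeled P f)
    (Pinf : Set (Submodule ℂ H)) (hPinf : IsPartition Pinf)
    (hev : IsEventualSup P Pinf)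
    (finf : Submodule ℂ H → S) (hfinf : IsLimitLabeling P f Pinf finf)
    (s₀ : S) :
    (⨅ n : ℕ, (sSup {p ∈ P n | f n p ≤ s₀}).topologicalClosure) =
      (sSup {p ∈ Pinf | finf p ≤ s₀}).topologicalClosure := by
  classical
  simp only [tc_eq]
  have hPtop : ∀ i, sSup (P i) = ⊤ := fun i => by rw [← tc_eq (sSup (P i))]; exact (hP i).2.2.2
  have hPinftop : sSup Pinf = ⊤ := by rw [← tc_eq (sSup Pinf)]; exact hPinf.2.2.2
  apply le_antisymm
  · -- LHS ≤ RHS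
    intro v hv
    have hv' : ∀ m : ℕ, v ∈ sSup {p ∈ P m | f m p ≤ s₀} := (Submodule.mem_iInf _).mp hv
    obtain ⟨N, hN⟩ := hev
    have href : ∀ m, N ≤ m → Refines (P m) Pinf := fun m hm => (hN N le_rfl).1 m hm
    have hvtop : v ∈ sSup Pinf := by rw [hPinftop]; trivial
    obtain ⟨g, hg, hgsum⟩ := mem_sSup_decomp hvtop
    rw [← hgsum]
    refine Submodule.sum_mem _ fun c _ => ?_
    by_cases hgood : finf (c : Submodule ℂ H) ≤ s₀
    · have hcle : (c : Submodule ℂ H) ≤ sSup {p ∈ Pinf | finf p ≤ s₀} :=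
        le_sSup ⟨c.2, hgood⟩
      exact hcle (hg c)
    -- bad cell: show g c = 0
    by_cases h0 : g c = 0
    · rw [h0]; exact Submodule.zero_mem _
    exfalso
    set u := g c with hu
    have huc : u ∈ (c : Submodule ℂ H) := hg c
    have huu : ⟪u, u⟫ ≠ 0 := fun h => h0 (inner_self_eq_zero.mp h)
    obtain ⟨q0, hq0, w0, hw0q, hw0u, -⟩ := partition_step (hP 0) huu
    obtain ⟨p, w, hp0, hpmem, hwmem, hwu, hcons⟩ := exists_chain hP 0 hq0 hw0q hw0u
    have hnonorth : ∀ i, ¬ Orth (p i) (c : Submodule ℂ H) := fun i hOrth =>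
      hwu i (hOrth (w i) (hwmem i) u huc)
    have hlub := hfinf c c.2 p hpmem hcons hnonorth
    have hmono : Monotone fun i => f i (p i) :=
      monotone_nat_of_le_succ fun i =>
        hf i (i + 1) (Nat.le_succ i) _ (hpmem i) _ (hpmem (i + 1)) (hcons i)
    have hbound : ∀ m, N ≤ m → f m (p m) ≤ s₀ := by
      intro m hm
      obtain ⟨c', hc', hle⟩ := href m hm (p m) (hpmem m)
      have hcc : c' = (c : Submodule ℂ H) := by
        by_contra hne
        exact hnonorth m fun x hx y hy => hPinf.2.2.1 c' hc' c c.2 hne x (hle hx) y hy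
      have hwmc : w m ∈ (c : Submodule ℂ H) := hcc ▸ hle (hwmem m)
      have hwv : ⟪w m, v⟫ ≠ 0 := by
        rw [← hgsum, decomp_inner_eq hPinf.2.2.1 g hg c hwmc]
        exact hwu m
      obtain ⟨g2, hg2, hg2sum⟩ := mem_sSup_decomp (hv' m)
      have : ∃ q ∈ g2.support, ⟪w m, g2 q⟫ ≠ 0 := by
        by_contra hcon
        push_neg at hcon
        refine hwv ?_
        rw [← hg2sum, Finsupp.sum, inner_sum]
        exact Finset.sum_eq_zero hcon
      obtain ⟨q, -, hq⟩ := this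
      have hqmem : (q : Submodule ℂ H) ∈ P m := q.2.1
      have hqle : f m (q : Submodule ℂ H) ≤ s₀ := q.2.2
      have hno : ¬ Orth (p m) (q : Submodule ℂ H) := fun hOrth =>
        hq (hOrth (w m) (hwmem m) (g2 q) (hg2 q))
      exact le_trans (hf m m le_rfl _ (hpmem m) _ hqmem hno) hqle
    have hub : ∀ i, f i (p i) ≤ s₀ := fun i =>
      le_trans (hmono (le_max_left i N)) (hbound _ (le_max_right i N))
    exact hgood (hlub.2 (by rintro x ⟨i, rfl⟩; exact hub i))
  · -- RHS ≤ LHS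
    refine le_iInf fun n => sSup_le fun pinf hpinf => ?_
    obtain ⟨hpinfmem, hple⟩ := hpinf
    intro v hv
    have hvtop : v ∈ sSup (P n) := by rw [hPtop n]; trivial
    obtain ⟨g, hg, hgsum⟩ := mem_sSup_decomp hvtop
    rw [← hgsum]
    refine Submodule.sum_mem _ fun q _ => ?_
    by_cases h0 : g q = 0
    · rw [h0]; exact Submodule.zero_mem _
    have hinner : ⟪g q, v⟫ ≠ 0 := by
      rw [← hgsum, decomp_inner_eq (hP n).2.2.1 g hg q (hg q)]
      exact fun h => h0 (inner_self_eq_zero.mp h)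
    obtain ⟨p, w, hpn, hpmem, hwmem, hwu, hcons⟩ := exists_chain hP n q.2 (hg q) hinner
    have hnonorth : ∀ i, ¬ Orth (p i) pinf := fun i hOrth =>
      hwu i (hOrth (w i) (hwmem i) v hv)
    have hlub := hfinf pinf hpinfmem p hpmem hcons hnonorth
    have hfq : f n (q : Submodule ℂ H) ≤ s₀ := by
      have h1 : f n (p n) ≤ finf pinf := hlub.1 ⟨n, rfl⟩
      rw [hpn] at h1
      exact le_trans h1 hple
    have hqle : (q : Submodule ℂ H) ≤ sSup {p ∈ P n | f n p ≤ s₀} :=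
      le_sSup ⟨q.2, hfq⟩
    exact hqle (hg q)
end

section
/- Let n be a positive integer and let A be a ℂ-linear subspace of the algebra of n×n complex matrices such that a·b* is a scalar multiple of the identity matrix for all a, b ∈ A, where b* denotes the conjugate transpose of b. Then either A = {0}, or A = ℂ·u for some unitary n×n matrix u. -/
/-- Let `n` be a positive integer and let `A` be a `ℂ`-linear subspace of
the algebra of `n × n` complex matrices such that `a * bᴴ` is a scalar multiple of the
identity matrix for all `a, b ∈ A` (where `bᴴ` is the conjugate transpose of `b`).  Then
either `A = {0}`, or `A = ℂ • u` for some unitary `n × n` matrix `u`. -/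
theorem subspace_mul_conjTranspose_scalar
    (n : ℕ) (hn : 0 < n) (A : Submodule ℂ (Matrix (Fin n) (Fin n) ℂ))
    (hA : ∀ a ∈ A, ∀ b ∈ A, ∃ l : ℂ,
      a * b.conjTranspose = l • (1 : Matrix (Fin n) (Fin n) ℂ)) :
    A = ⊥ ∨ ∃ u : Matrix (Fin n) (Fin n) ℂ,
      u * u.conjTranspose = 1 ∧ u.conjTranspose * u = 1 ∧ A = Submodule.span ℂ {u} := by
  by_cases hbot : A = ⊥
  · exact Or.inl hbot
  right
  obtain ⟨a, haA, ha0⟩ := (Submodule.ne_bot_iff A).mp hbot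
  obtain ⟨l, hl⟩ := hA a haA a haA
  obtain ⟨i, j, hij⟩ : ∃ i j, a i j ≠ 0 := by
    by_contra h
    push_neg at h
    exact ha0 (by ext i j; simpa using h i j)
  set s : ℝ := ∑ k, Complex.normSq (a i k) with hs
  have hsl : (s : ℂ) = l := by
    have h1 := congrFun (congrFun hl i) i
    simp only [Matrix.mul_apply, Matrix.conjTranspose_apply, Matrix.smul_apply,
      Matrix.one_apply_eq, smul_eq_mul, mul_one] at h1
    rw [hs]
    push_cast
    rw [← h1]
    exact Finset.sum_congr rfl fun k _ => (Complex.mul_conj (a i k)).symm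
  have hspos : 0 < s := by
    have h1 : Complex.normSq (a i j) ≤ s := by
      apply Finset.single_le_sum (fun k _ => Complex.normSq_nonneg (a i k))
      exact Finset.mem_univ j
    have h2 : 0 < Complex.normSq (a i j) := Complex.normSq_pos.mpr hij
    linarith
  set c : ℂ := ((((Real.sqrt s)⁻¹ : ℝ)) : ℂ) with hc
  set u : Matrix (Fin n) (Fin n) ℂ := c • a with hu
  have hcc : c * c = (s : ℂ)⁻¹ := by
    rw [hc]
    push_cast
    rw [← mul_inv]
    congr 1
    exact_mod_cast congrArg (Complex.ofReal) (Real.mul_self_sqrt hspos.le)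
  have huu : u * u.conjTranspose = 1 := by
    rw [hu, Matrix.conjTranspose_smul, Matrix.smul_mul, Matrix.mul_smul, hl, smul_smul,
      smul_smul]
    have hstarc : star c = c := by rw [hc]; exact Complex.conj_ofReal _
    rw [hstarc, hcc, ← hsl]
    rw [← Complex.ofReal_inv, ← Complex.ofReal_mul, inv_mul_cancel₀ hspos.ne']
    simp
  have huu' : u.conjTranspose * u = 1 := mul_eq_one_comm.mp huu
  have huA : u ∈ A := A.smul_mem c haA
  refine ⟨u, huu, huu', ?_⟩
  apply le_antisymm
  · intro x hx
    obtain ⟨μ, hμ⟩ := hA x hx u huA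
    rw [Submodule.mem_span_singleton]
    refine ⟨μ, ?_⟩
    calc μ • u = (μ • (1 : Matrix (Fin n) (Fin n) ℂ)) * u := by
          rw [Matrix.smul_mul, one_mul]
      _ = (x * u.conjTranspose) * u := by rw [hμ]
      _ = x * (u.conjTranspose * u) := by rw [Matrix.mul_assoc]
      _ = x := by rw [huu', mul_one]
  · rw [Submodule.span_le, Set.singleton_subset_iff]
    exact huA
end
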